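/- arXiv:math/0602616 — 3 statements merged into one kernel-verified Lean document; each statement's English description precedes it below -/
import Mathlib

section
/- Let (L_•, d_•) be a free resolution of the A-module M with augmentation ρ : L₀ → M, and let τ : M → L₀ be a k-linear section of ρ. Let φ : L₁ → M' be A-linear with φ ∘ d₁ = 0 (a 1-cocycle). For a ∈ A and m ∈ M, choose x ∈ L₁ with d₀(x) = a τ(m) − τ(a m) (possible since ρ(a τ(m) − τ(a m)) = 0 and L_• is exact). Then ψ(a)(m) := φ(x) is independent of the choice of x, ψ(a) : M → M' is k-linear, and ψ : A → Hom_k(M, M') is a k-linear derivation with respect to the A-A-bimodule structure on Hom_k(M, M'). -/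
/-- given a free resolution `⋯ → L₂ → L₁ → L₀ → M → 0`, a `k`-linear section
`τ` of the augmentation `ρ`, and a 1-cocycle `φ : L₁ → M'`, the formula `ψ(a)(m) = φ(x)`,
where `d₀ x = a τ(m) − τ(a m)`, is independent of the choice of `x` and defines a `k`-linear
derivation `ψ : A → Hom_k(M, M')`. -/
theorem stmt15 {k A M M' L₀ L₁ L₂ : Type*} [Field k] [CommRing A] [Algebra k A]
    [AddCommGroup M] [Module k M] [Module A M] [IsScalarTower k A M]
    [AddCommGroup M'] [Module k M'] [Module A M'] [IsScalarTower k A M']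
    [AddCommGroup L₀] [Module A L₀] [Module k L₀] [IsScalarTower k A L₀] [Module.Free A L₀]
    [AddCommGroup L₁] [Module A L₁] [Module k L₁] [IsScalarTower k A L₁] [Module.Free A L₁]
    [AddCommGroup L₂] [Module A L₂] [Module k L₂] [IsScalarTower k A L₂] [Module.Free A L₂]
    (ρ : L₀ →ₗ[A] M) (d₀ : L₁ →ₗ[A] L₀) (d₁ : L₂ →ₗ[A] L₁)
    (hρ : Function.Surjective ρ)
    (hex₀ : LinearMap.range d₀ = LinearMap.ker ρ)
    (hex₁ : LinearMap.range d₁ = LinearMap.ker d₀)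
    (τ : M →ₗ[k] L₀) (hτ : ∀ m : M, ρ (τ m) = m)
    (φ : L₁ →ₗ[A] M') (hφ : ∀ y : L₂, φ (d₁ y) = 0) :
    -- well-definedness: `φ(x)` does not depend on the choice of `x`
    (∀ (a : A) (m : M) (x x' : L₁),
      d₀ x = a • τ m - τ (a • m) → d₀ x' = a • τ m - τ (a • m) → φ x = φ x') ∧
    -- `ψ(a)` is `k`-linear in `m`, and `ψ` is a derivation `A → Hom_k(M, M')`
    (∃ ψ : A → M →ₗ[k] M',
      (∀ (a : A) (m : M) (x : L₁),
        d₀ x = a • τ m - τ (a • m) → ψ a m = φ x) ∧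
      (∀ (c : k) (a b : A), ψ (c • a + b) = c • ψ a + ψ b) ∧
      (∀ (a b : A) (m : M), ψ (a * b) m = a • ψ b m + ψ a (b • m))) := by
  -- well-definedness
  have wd : ∀ (x x' : L₁), d₀ x = d₀ x' → φ x = φ x' := by
    intro x x' h
    have hk : x - x' ∈ LinearMap.ker d₀ := by
      simp [LinearMap.mem_ker, h]
    rw [← hex₁] at hk
    obtain ⟨y, hy⟩ := hk
    have h0 : φ (x - x') = 0 := by rw [← hy]; exact hφ y
    rw [map_sub, sub_eq_zero] at h0
    exact h0
  have hmem : ∀ (a : A) (m : M), a • τ m - τ (a • m) ∈ LinearMap.range d₀ := by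
    intro a m
    rw [hex₀, LinearMap.mem_ker, map_sub, map_smul, hτ, hτ, sub_self]
  classical
  set pick : A → M → L₁ := fun a m => (hmem a m).choose with hpick
  have hspec : ∀ (a : A) (m : M), d₀ (pick a m) = a • τ m - τ (a • m) :=
    fun a m => (hmem a m).choose_spec
  have key : ∀ (a : A) (m : M) (x : L₁), d₀ x = a • τ m - τ (a • m) →
      φ (pick a m) = φ x := by
    intro a m x hx
    exact wd _ _ (by rw [hspec, hx])
  refine ⟨fun a m x x' hx hx' => wd x x' (by rw [hx, hx']), ?_⟩
  refine ⟨fun a => { toFun := fun m => φ (pick a m), map_add' := ?_, map_smul' := ?_ }, ?_, ?_, ?_⟩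
  · intro m₁ m₂
    rw [← map_add]
    refine key a (m₁ + m₂) (pick a m₁ + pick a m₂) ?_
    simp only [map_add, hspec, smul_add]
    abel
  · intro c m
    simp only [RingHom.id_apply]
    rw [← LinearMap.map_smul_of_tower]
    refine key a (c • m) (c • pick a m) ?_
    rw [LinearMap.map_smul_of_tower, hspec, smul_sub, map_smul τ c m,
      smul_comm a c (τ m), smul_comm a c m, ← map_smul τ c (a • m)]
  · intro a m x hx
    exact key a m x hx
  · intro c a b
    ext m
    simp only [LinearMap.add_apply, LinearMap.smul_apply, LinearMap.coe_mk, AddHom.coe_mk]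
    rw [← LinearMap.map_smul_of_tower, ← map_add]
    refine key (c • a + b) m (c • pick a m + pick b m) ?_
    simp only [map_add, LinearMap.map_smul_of_tower, hspec, add_smul, smul_assoc,
      map_smul, smul_sub]
    abel
  · intro a b m
    simp only [LinearMap.coe_mk, AddHom.coe_mk]
    rw [← map_smul φ, ← map_add]
    refine key (a * b) m (a • pick b m + pick a (b • m)) ?_
    simp only [map_add, map_smul, hspec, mul_smul, smul_sub]
    abel
end

section
/- With notation as above, if the 1-cocycle φ : L₁ → M' is a coboundary, i.e. φ = φ' ∘ d₀ for some A-linear φ' : L₀ → M', then the associated derivation ψ : A → Hom_k(M, M') is trivial: ψ(a) = a ψ₀ − ψ₀ a where ψ₀ = φ' ∘ τ ∈ Hom_k(M, M'). Conversely, if ψ is a trivial derivation then φ is a coboundary. Hence the assignment φ ↦ [ψ] induces an injective k-linear map Ext¹_A(M, M') → HH¹(A, Hom_k(M, M')). -/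
/-- with notation as in the construction of `ψ` from a 1-cocycle
`φ : L₁ → M'`, the cocycle `φ` is a coboundary (i.e. `φ = φ' ∘ d₀` for some `A`-linear
`φ' : L₀ → M'`) if and only if the associated derivation `ψ` is trivial (inner); hence
`φ ↦ [ψ]` induces an injective `k`-linear map `Ext¹_A(M, M') → HH¹(A, Hom_k(M, M'))`. -/
theorem stmt16 {k A M M' L₀ L₁ L₂ : Type*} [Field k] [CommRing A] [Algebra k A]
    [AddCommGroup M] [Module k M] [Module A M] [IsScalarTower k A M]
    [AddCommGroup M'] [Module k M'] [Module A M'] [IsScalarTower k A M']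
    [AddCommGroup L₀] [Module A L₀] [Module k L₀] [IsScalarTower k A L₀] [Module.Free A L₀]
    [AddCommGroup L₁] [Module A L₁] [Module k L₁] [IsScalarTower k A L₁] [Module.Free A L₁]
    [AddCommGroup L₂] [Module A L₂] [Module k L₂] [IsScalarTower k A L₂] [Module.Free A L₂]
    (ρ : L₀ →ₗ[A] M) (d₀ : L₁ →ₗ[A] L₀) (d₁ : L₂ →ₗ[A] L₁)
    (hρ : Function.Surjective ρ)
    (hex₀ : LinearMap.range d₀ = LinearMap.ker ρ)
    (hex₁ : LinearMap.range d₁ = LinearMap.ker d₀)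
    (τ : M →ₗ[k] L₀) (hτ : ∀ m : M, ρ (τ m) = m)
    (φ : L₁ →ₗ[A] M') (hφ : ∀ y : L₂, φ (d₁ y) = 0)
    (ψ : A → M →ₗ[k] M')
    (hψ : ∀ (a : A) (m : M) (x : L₁),
      d₀ x = a • τ m - τ (a • m) → ψ a m = φ x) :
    -- `φ` is a coboundary iff `ψ` is a trivial derivation
    (∃ φ' : L₀ →ₗ[A] M', ∀ x : L₁, φ x = φ' (d₀ x)) ↔
    (∃ ψ₀ : M →ₗ[k] M', ∀ (a : A) (m : M), ψ a m = a • ψ₀ m - ψ₀ (a • m)) := by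
  -- φ is well defined on images of d₀
  have φwd : ∀ y y' : L₁, d₀ y = d₀ y' → φ y = φ y' := by
    intro y y' h
    have hk : y - y' ∈ LinearMap.ker d₀ := by simp [LinearMap.mem_ker, h]
    rw [← hex₁] at hk
    obtain ⟨z, hz⟩ := hk
    have : φ (y - y') = 0 := by rw [← hz]; exact hφ z
    have := sub_eq_zero.mp (by simpa using this)
    exact this
  have hker : ∀ x : L₀, ρ x = 0 → ∃ y : L₁, d₀ y = x := by
    intro x hx
    have : x ∈ LinearMap.ker ρ := hx
    rw [← hex₀] at this
    exact this
  constructor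
  · rintro ⟨φ', hφ'⟩
    refine ⟨(φ'.restrictScalars k).comp τ, ?_⟩
    intro a m
    obtain ⟨x, hx⟩ := hker (a • τ m - τ (a • m)) (by simp [hτ, ← map_smul ρ a (τ m)])
    rw [hψ a m x hx, hφ' x, hx]
    simp
  · rintro ⟨ψ₀, hψ₀⟩
    -- choice function: for each x, pick y with d₀ y = x - τ (ρ x)
    have hch : ∀ x : L₀, ∃ y : L₁, d₀ y = x - τ (ρ x) := by
      intro x
      exact hker _ (by simp [hτ])
    choose c hc using hch
    set g : L₀ → M' := fun x => φ (c x) + ψ₀ (ρ x) with hg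
    have hgval : ∀ (x : L₀) (y : L₁), d₀ y = x - τ (ρ x) → g x = φ y + ψ₀ (ρ x) := by
      intro x y hy
      rw [hg]
      simp only
      rw [φwd (c x) y (by rw [hc, hy])]
    have hadd : ∀ x x' : L₀, g (x + x') = g x + g x' := by
      intro x x'
      have : d₀ (c x + c x') = (x + x') - τ (ρ (x + x')) := by
        simp [hc x, hc x']; abel
      rw [hgval _ _ this]
      simp [hg]; abel
    have hsmul : ∀ (a : A) (x : L₀), g (a • x) = a • g x := by
      intro a x
      obtain ⟨w, hw⟩ := hker (a • τ (ρ x) - τ (a • ρ x))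
        (by simp [hτ, ← map_smul ρ a (τ (ρ x))])
      have hwψ : φ w = a • ψ₀ (ρ x) - ψ₀ (a • ρ x) := by
        rw [← hψ a (ρ x) w hw, hψ₀]
      have : d₀ (a • c x + w) = a • x - τ (ρ (a • x)) := by
        rw [map_add, d₀.map_smul, hc x, hw, ρ.map_smul, smul_sub]
        abel
      rw [hgval _ _ this]
      simp only [map_add, map_smul, hwψ, hg, map_smul ρ]
      rw [smul_add]
      abel
    refine ⟨{ toFun := g, map_add' := hadd, map_smul' := hsmul }, ?_⟩
    intro z
    show φ z = g (d₀ z)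
    have hρd : ρ (d₀ z) = 0 := by
      have : d₀ z ∈ LinearMap.ker ρ := hex₀ ▸ LinearMap.mem_range_self d₀ z
      exact this
    have : g (d₀ z) = φ z + ψ₀ (ρ (d₀ z)) := hgval _ z (by rw [hρd]; simp)
    rw [this, hρd]
    simp
end

section
/- Suppose ∇ and ∇' are two k-linear g-connections on M (k-linear maps g → End_k(M), not necessarily A-linear in the g variable, satisfying the Leibniz rule in M). Then the map φ : A → Hom_k(g, End_A(M)) defined by φ(a)(D) = a ∇_D − ∇_{a D} takes values in Hom_k(g, End_A(M)) (i.e. a ∇_D − ∇_{a D} is an A-linear endomorphism of M for each a, D), and φ is a derivation from A to the bimodule Hom_k(g, End_A(M)). Moreover φ − φ' (computed from ∇ and ∇') is the inner derivation associated to ∇ − ∇' ∈ Hom_k(g, End_A(M)); hence the class [φ] ∈ HH¹(A, Hom_k(g, End_A(M))) is independent of the choice of k-linear g-connection. -/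
set_option maxRecDepth 4000
set_option maxHeartbeats 1000000


/-- for two `k`-linear `g`-connections `∇, ∇'` on `M`, the map
`φ(a)(D) = a ∇_D − ∇_{a D}` takes values in `End_A(M)`, is a derivation
`A → Hom_k(g, End_A(M))`, and `φ − φ'` is the inner derivation of `∇ − ∇'`; hence the
class `[φ] ∈ HH¹(A, Hom_k(g, End_A(M)))` does not depend on the chosen connection. -/
theorem stmt17 {k A M : Type*} [Field k] [CommRing A] [Algebra k A]
    [AddCommGroup M] [Module k M] [Module A M] [IsScalarTower k A M]
    (g : Submodule A (Derivation k A A))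
    (N N' : g → M →ₗ[k] M)
    -- `N`, `N'` are `k`-linear `g`-connections on `M`:
    (haddN : ∀ D D', N (D + D') = N D + N D')
    (hkN : ∀ (c : k) (D : g), N (c • D) = c • N D)
    (hleibN : ∀ (D : g) (a : A) (m : M),
      N D (a • m) = a • N D m + (D : Derivation k A A) a • m)
    (haddN' : ∀ D D', N' (D + D') = N' D + N' D')
    (hkN' : ∀ (c : k) (D : g), N' (c • D) = c • N' D)
    (hleibN' : ∀ (D : g) (a : A) (m : M),
      N' D (a • m) = a • N' D m + (D : Derivation k A A) a • m)
    (Φ Φ' : A → g → M →ₗ[k] M)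
    (hΦ : ∀ (a : A) (D : g), Φ a D = a • N D - N (a • D))
    (hΦ' : ∀ (a : A) (D : g), Φ' a D = a • N' D - N' (a • D)) :
    -- `Φ a D` is an `A`-linear endomorphism of `M`:
    (∀ (a : A) (D : g) (b : A) (m : M), Φ a D (b • m) = b • Φ a D m) ∧
    -- `Φ` is a derivation `A → Hom_k(g, End_A(M))`:
    (∀ (a b : A) (D : g), Φ (a * b) D = a • Φ b D + Φ a (b • D)) ∧
    -- `Φ − Φ'` is the inner derivation associated to `ψ₀ = N − N'`:
    (∀ (a : A) (D : g),
      Φ a D - Φ' a D = a • (N D - N' D) - (N (a • D) - N' (a • D))) := by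
  refine ⟨?_, ?_, ?_⟩
  · intro a D b m
    have hcoe : ((a • D : g) : Derivation k A A) b = a * (D : Derivation k A A) b := by
      rfl
    rw [hΦ a D, LinearMap.sub_apply, LinearMap.sub_apply, LinearMap.smul_apply,
      LinearMap.smul_apply, hleibN D b m, hleibN (a • D) b m, hcoe, smul_add,
      smul_sub, smul_smul a b, smul_smul a, smul_smul b, mul_comm b a]
    abel
  · intro a b D
    ext m
    rw [hΦ, hΦ, hΦ, mul_smul a b D]
    simp only [LinearMap.add_apply, LinearMap.sub_apply, LinearMap.smul_apply,
      smul_sub, smul_smul]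
    abel
  · intro a D
    simp only [hΦ, hΦ', smul_sub]
    abel
end
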